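/- Let φ be an exponential map on an integral domain A over a field k. If a, b ∈ A are such that the product ab lies in A^φ and ab ≠ 0, then both a and b lie in A^φ; that is, A^φ is factorially closed in A. -/
import Mathlib


open Polynomial

/-- An exponential map on a `k`-algebra `A`: a `k`-algebra homomorphism `φ : A → A[U]`
such that evaluating at `U = 0` is the identity and `φ_S φ_U = φ_{S+U}`. -/
def IsExpMap {k A : Type*} [CommSemiring k] [CommSemiring A] [Algebra k A]
    (φ : A →ₐ[k] A[X]) : Prop :=
  (∀ a : A, (φ a).eval 0 = a) ∧
  (∀ a : A,
    eval₂ ((mapRingHom (C : A →+* A[X])).comp (φ : A →+* A[X])) (C X) (φ a)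
      = eval₂ ((C : A[X] →+* A[X][X]).comp (C : A →+* A[X])) (X + C X) (φ a))

/-- The ring of `φ`-invariants `A^φ = {a : A | φ a = a}`. -/
noncomputable def expInv {k A : Type*} [CommSemiring k] [CommSemiring A] [Algebra k A]
    (φ : A →ₐ[k] A[X]) : Subalgebra k A :=
  AlgHom.equalizer φ (IsScalarTower.toAlgHom k A A[X])

/-- The AK invariant: the intersection of the rings of invariants of all exponential maps. -/
noncomputable def AK (k A : Type*) [CommSemiring k] [CommSemiring A] [Algebra k A] : Subalgebra k A :=
  ⨅ φ ∈ {ψ : A →ₐ[k] A[X] | IsExpMap ψ}, expInv φ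


/-- The ring of invariants of an exponential map on a domain is
factorially closed. -/
theorem statement2 {k A : Type*} [Field k] [CommRing A] [IsDomain A] [Algebra k A]
    (φ : A →ₐ[k] A[X]) (hφ : IsExpMap φ)
    (a b : A) (hab : a * b ∈ expInv φ) (hab0 : a * b ≠ 0) :
    a ∈ expInv φ ∧ b ∈ expInv φ := by
  have key : ∀ x : A, (φ x).natDegree = 0 → x ∈ expInv φ := by
    intro x hx
    obtain ⟨c, hc⟩ := Polynomial.natDegree_eq_zero.mp hx
    have hcx : c = x := by
      have := hφ.1 x
      rw [← hc, eval_C] at this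
      exact this
    show φ x = _
    simp [← hc, hcx, IsScalarTower.toAlgHom_apply, Algebra.algebraMap_self_apply,
      algebraMap_eq]
  have hmem : φ (a * b) = C (a * b) := hab
  have hmul : φ a * φ b = C (a * b) := by rw [← map_mul]; exact hmem
  have ha0 : φ a ≠ 0 := by
    intro h; apply hab0
    have : (C : A →+* A[X]) (a*b) = 0 := by rw [← hmul, h, zero_mul]
    simpa using this
  have hb0 : φ b ≠ 0 := by
    intro h; apply hab0
    have : (C : A →+* A[X]) (a*b) = 0 := by rw [← hmul, h, mul_zero]
    simpa using this
  have hdeg : (φ a).natDegree + (φ b).natDegree = 0 := by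
    rw [← Polynomial.natDegree_mul ha0 hb0, hmul, Polynomial.natDegree_C]
  exact ⟨key a (Nat.eq_zero_of_add_eq_zero_right hdeg),
    key b (Nat.eq_zero_of_add_eq_zero_left hdeg)⟩
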